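/- Let M > 0, let W ∈ C⁰([0,δ]) take values in [0,M], let t̃, t ∈ [0,δ] with t̃ ≥ t and δ‖λ_x‖_{C⁰} ≤ 1/2, and fix x ∈ [0,1]. Let ξ₃ and ξ̃₃ solve dξ/ds = λ(ξ(s),W(s)) with ξ₃(t)=x and ξ̃₃(t̃)=x, remaining in [0,1], and let α, α̃ ∈ [0,δ] be such that ξ₃(α)=0 and ξ̃₃(α̃)=0. Then there exists a constant C, depending only on M, δ, and the C¹-norm of λ on [0,1]×[0,M] (and not on x, t, t̃), such that sup_{s∈[α̃,t]} |ξ̃₃(s) − ξ₃(s)| ≤ C|t̃ − t| and |α̃ − α| ≤ C|t̃ − t|. -/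

import Mathlib

open MeasureTheory Set Filter Function intervalIntegral

noncomputable section

/-- Total mass `W(t) = ∫₀¹ ρ(t,x) dx`. -/
def totalMass (ρ : ℝ → ℝ → ℝ) (t : ℝ) : ℝ := ∫ x in (0:ℝ)..1, ρ t x

/-- The velocity `λ` is `C¹` on `[0,1] × [0,∞)` and positive there. -/
def VelocityHyp (lam : ℝ → ℝ → ℝ) : Prop :=
  ContDiffOn ℝ 1 (uncurry lam) (Icc (0:ℝ) 1 ×ˢ Ici (0:ℝ)) ∧
    ∀ x ∈ Icc (0:ℝ) 1, ∀ w ∈ Ici (0:ℝ), 0 < lam x w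

/-- `f` is measurable and essentially bounded on `(a,b)`, i.e. `f ∈ L^∞(a,b)`. -/
def MeasBdd (a b : ℝ) (f : ℝ → ℝ) : Prop :=
  Measurable f ∧ ∃ C : ℝ, ∀ᵐ x : ℝ, x ∈ Ioo a b → |f x| ≤ C

/-- `f ∈ L^∞(a,b)` and `f` is nonnegative a.e. on `(a,b)`. -/
def MeasBddNonneg (a b : ℝ) (f : ℝ → ℝ) : Prop :=
  MeasBdd a b f ∧ ∀ᵐ x : ℝ, x ∈ Ioo a b → 0 ≤ f x

/-- `ρ ∈ C⁰([0,T]; L^p(0,1))`. -/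
def ContInLp (T p : ℝ) (ρ : ℝ → ℝ → ℝ) : Prop :=
  ∀ t₀ ∈ Icc (0:ℝ) T,
    Tendsto (fun t => ∫ x in (0:ℝ)..1, |ρ t x - ρ t₀ x| ^ p)
      (nhdsWithin t₀ (Icc (0:ℝ) T)) (nhds 0)

/-- Hidden regularity: `ρ ∈ C⁰([0,1]; L^p(0,T))`. -/
def ContInX (T p : ℝ) (ρ : ℝ → ℝ → ℝ) : Prop :=
  ∀ x₀ ∈ Icc (0:ℝ) 1,
    Tendsto (fun x => ∫ t in (0:ℝ)..T, |ρ t x - ρ t x₀| ^ p)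
      (nhdsWithin x₀ (Icc (0:ℝ) 1)) (nhds 0)

/-- `ρ ∈ L^∞((0,T) × (0,1))` (with joint measurability). -/
def BddOnRect (T : ℝ) (ρ : ℝ → ℝ → ℝ) : Prop :=
  Measurable (uncurry ρ) ∧
    ∃ C : ℝ, ∀ᵐ q : ℝ × ℝ, q ∈ Ioo (0:ℝ) T ×ˢ Ioo (0:ℝ) 1 → |ρ q.1 q.2| ≤ C

/-- Weak solution of `ρ_t + (ρ λ(x, W(t)))_x = 0`, `ρ(0,·) = ρ₀`,
`ρ(·,0) λ(0, W(·)) = u`, in the sense of Coron's definition. -/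
structure IsWeakSolution (lam : ℝ → ℝ → ℝ) (T : ℝ) (ρ₀ u : ℝ → ℝ)
    (ρ : ℝ → ℝ → ℝ) : Prop where
  contL1 : ContInLp T 1 ρ
  bdd : BddOnRect T ρ
  weak : ∀ τ ∈ Icc (0:ℝ) T, ∀ φ : ℝ → ℝ → ℝ,
    ContDiff ℝ 1 (uncurry φ) →
    (∀ x ∈ Icc (0:ℝ) 1, φ τ x = 0) →
    (∀ t ∈ Icc (0:ℝ) τ, φ t 1 = 0) →
    (∫ t in (0:ℝ)..τ, ∫ x in (0:ℝ)..1,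
        ρ t x * (deriv (fun s => φ s x) t
          + lam x (totalMass ρ t) * deriv (fun y => φ t y) x))
      + (∫ t in (0:ℝ)..τ, u t * φ t 0)
      + (∫ x in (0:ℝ)..1, ρ₀ x * φ 0 x) = 0

/-- `L¹` norm on `(a,b)`. -/
def L1Norm (a b : ℝ) (f : ℝ → ℝ) : ℝ := ∫ x in a..b, |f x|

/-- `L^p` norm on `(a,b)`. -/
def LpNorm (p a b : ℝ) (f : ℝ → ℝ) : ℝ := (∫ x in a..b, |f x| ^ p) ^ (1 / p)

/-- `L^∞` norm (essential supremum) on `(a,b)`. -/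
def LinfNorm (a b : ℝ) (f : ℝ → ℝ) : ℝ :=
  essSup (fun x => |f x|) (volume.restrict (Ioo a b))

/-- `λ̄(M)`: infimum of `λ` over `[0,1] × [0,M]`. -/
def lamInf (lam : ℝ → ℝ → ℝ) (M : ℝ) : ℝ :=
  sInf ((fun q : ℝ × ℝ => lam q.1 q.2) '' (Icc (0:ℝ) 1 ×ˢ Icc (0:ℝ) M))

/-- `‖λ‖_{C⁰}`: supremum of `|λ|` over `[0,1] × [0,M]`. -/
def lamSup (lam : ℝ → ℝ → ℝ) (M : ℝ) : ℝ :=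
  sSup ((fun q : ℝ × ℝ => |lam q.1 q.2|) '' (Icc (0:ℝ) 1 ×ˢ Icc (0:ℝ) M))

/-- The partial derivative `λ_x` (in the space variable). -/
def lamx (lam : ℝ → ℝ → ℝ) (x w : ℝ) : ℝ :=
  derivWithin (fun y => lam y w) (Icc (0:ℝ) 1) x

/-- The partial derivative `λ_W` (in the total-mass variable). -/
def lamW (lam : ℝ → ℝ → ℝ) (x w : ℝ) : ℝ :=
  derivWithin (fun v => lam x v) (Ici (0:ℝ)) w

/-- `‖λ_x‖_{C⁰}`: supremum of `|λ_x|` over `[0,1] × [0,M]`. -/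
def lamxSup (lam : ℝ → ℝ → ℝ) (M : ℝ) : ℝ :=
  sSup ((fun q : ℝ × ℝ => |lamx lam q.1 q.2|) '' (Icc (0:ℝ) 1 ×ˢ Icc (0:ℝ) M))

/-- `‖λ_W‖_{C⁰}`: supremum of `|λ_W|` over `[0,1] × [0,M]`. -/
def lamWSup (lam : ℝ → ℝ → ℝ) (M : ℝ) : ℝ :=
  sSup ((fun q : ℝ × ℝ => |lamW lam q.1 q.2|) '' (Icc (0:ℝ) 1 ×ˢ Icc (0:ℝ) M))

/-- Lower slope bound from a pointwise lower bound on the derivative. -/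
private lemma slope_lower_aux {f φ : ℝ → ℝ} {a b m : ℝ}
    (hd : ∀ s ∈ Icc a b, HasDerivAt f (φ s) s)
    (hm : ∀ s ∈ Icc a b, m ≤ φ s)
    {s₁ s₂ : ℝ} (h1 : s₁ ∈ Icc a b) (h2 : s₂ ∈ Icc a b) (h12 : s₁ ≤ s₂) :
    m * (s₂ - s₁) ≤ f s₂ - f s₁ := by
  have hF : ∀ s ∈ Icc a b, HasDerivAt (fun y => f y - m * y) (φ s - m) s := by
    intro s hs
    exact (hd s hs).sub (by simpa using (hasDerivAt_id s).const_mul m)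
  have hmono : MonotoneOn (fun y => f y - m * y) (Icc a b) := by
    apply monotoneOn_of_deriv_nonneg (convex_Icc a b)
    · intro s hs
      exact (hF s hs).continuousAt.continuousWithinAt
    · intro s hs
      rw [interior_Icc] at hs
      exact (hF s (Ioo_subset_Icc_self hs)).differentiableAt.differentiableWithinAt
    · intro s hs
      rw [interior_Icc] at hs
      rw [(hF s (Ioo_subset_Icc_self hs)).deriv]
      have := hm s (Ioo_subset_Icc_self hs)
      linarith
  have := hmono h1 h2 h12
  simp only at this
  linarith

/-- Upper slope bound from a pointwise upper bound on the derivative. -/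
private lemma slope_upper_aux {f φ : ℝ → ℝ} {a b Λ : ℝ}
    (hd : ∀ s ∈ Icc a b, HasDerivAt f (φ s) s)
    (hΛ : ∀ s ∈ Icc a b, φ s ≤ Λ)
    {s₁ s₂ : ℝ} (h1 : s₁ ∈ Icc a b) (h2 : s₂ ∈ Icc a b) (h12 : s₁ ≤ s₂) :
    f s₂ - f s₁ ≤ Λ * (s₂ - s₁) := by
  have := slope_lower_aux (f := fun y => -f y) (φ := fun s => -φ s) (m := -Λ)
    (fun s hs => (hd s hs).neg) (fun s hs => neg_le_neg (hΛ s hs)) h1 h2 h12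
  try simp only at this
  linarith

/-- Backward (left-endpoint) version of Grönwall's estimate for two exact
solutions of the same ODE, obtained by time reversal. -/
private lemma gronwall_left_aux {v : ℝ → ℝ → ℝ} {s : ℝ → Set ℝ} {K : NNReal}
    (hv : ∀ t, LipschitzOnWith K (v t) (s t))
    {f g : ℝ → ℝ} {a b δ : ℝ}
    (hf : ContinuousOn f (Icc a b))
    (hf' : ∀ t ∈ Ioc a b, HasDerivWithinAt f (v t (f t)) (Iic t) t)
    (hfs : ∀ t ∈ Ioc a b, f t ∈ s t)
    (hg : ContinuousOn g (Icc a b))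
    (hg' : ∀ t ∈ Ioc a b, HasDerivWithinAt g (v t (g t)) (Iic t) t)
    (hgs : ∀ t ∈ Ioc a b, g t ∈ s t)
    (hb : dist (f b) (g b) ≤ δ) :
    ∀ t ∈ Icc a b, dist (f t) (g t) ≤ δ * Real.exp (K * (b - t)) := by
  have hv' : ∀ t, LipschitzOnWith K (Neg.neg ∘ (v (-t))) (s (-t)) := fun t => by
    rw [← one_mul K]
    exact LipschitzWith.id.neg.comp_lipschitzOnWith (hv _)
  have hmt1 : MapsTo Neg.neg (Icc (-b) (-a)) (Icc a b) :=
    fun _ ht ↦ ⟨le_neg.mp ht.2, neg_le.mp ht.1⟩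
  have hmt2 : MapsTo Neg.neg (Ico (-b) (-a)) (Ioc a b) :=
    fun _ ht ↦ ⟨lt_neg.mp ht.2, neg_le.mp ht.1⟩
  have hmt3 (t : ℝ) : MapsTo Neg.neg (Ici t) (Iic (-t)) :=
    fun _ ht' ↦ mem_Iic.mpr <| neg_le_neg ht'
  intro t ht
  have key := dist_le_of_trajectories_ODE_of_mem (v := fun t => Neg.neg ∘ (v (-t)))
      (s := fun t => s (-t)) (K := K) (a := -b) (b := -a) (δ := δ) (fun t _ => hv' t)
      (hf.comp continuousOn_neg hmt1) ?_ (fun _ ht ↦ hfs _ (hmt2 ht))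
      (hg.comp continuousOn_neg hmt1) ?_ (fun _ ht ↦ hgs _ (hmt2 ht))
      (by simpa using hb) (-t) ⟨neg_le_neg ht.2, neg_le_neg ht.1⟩
  · simp only [Function.comp_apply, neg_neg] at key
    have harg : -t - -b = b - t := by ring
    rwa [harg] at key
  · intro u hu
    have h := HasDerivWithinAt.scomp u (hf' (-u) (hmt2 hu))
      (hasDerivAt_neg u).hasDerivWithinAt (hmt3 u)
    simpa [Function.comp] using h
  · intro u hu
    have h := HasDerivWithinAt.scomp u (hg' (-u) (hmt2 hu))
      (hasDerivAt_neg u).hasDerivWithinAt (hmt3 u)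
    simpa [Function.comp] using h

/-- Continuity of backward characteristics (and of their
hitting times on the `t`-axis) with respect to the terminal time: there is a
constant `C`, depending only on `M`, `δ` and `λ` (not on `x`, `t`, `t̃`, nor on
the particular `W`), such that `sup_{s∈[α̃,t]} |ξ̃₃(s) − ξ₃(s)| ≤ C|t̃ − t|` and
`|α̃ − α| ≤ C|t̃ − t|`. -/
theorem characteristic_time_continuity
    (lam : ℝ → ℝ → ℝ) (hlam : VelocityHyp lam)
    (M δ : ℝ) (hM : 0 < M) (hδ0 : 0 ≤ δ)
    (hδ : δ * lamxSup lam M ≤ 1 / 2) :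
    ∃ C > 0, ∀ W : ℝ → ℝ, ContinuousOn W (Icc 0 δ) →
      (∀ s ∈ Icc (0:ℝ) δ, W s ∈ Icc (0:ℝ) M) →
      ∀ t tt : ℝ, t ∈ Icc (0:ℝ) δ → tt ∈ Icc (0:ℝ) δ → t ≤ tt →
      ∀ x ∈ Icc (0:ℝ) 1, ∀ ξ ξt : ℝ → ℝ, ∀ α αt : ℝ,
        α ∈ Icc (0:ℝ) t → αt ∈ Icc (0:ℝ) tt →
        (∀ s ∈ Icc α t, HasDerivAt ξ (lam (ξ s) (W s)) s) →
        ξ t = x → ξ α = 0 → (∀ s ∈ Icc α t, ξ s ∈ Icc (0:ℝ) 1) →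
        (∀ s ∈ Icc αt tt, HasDerivAt ξt (lam (ξt s) (W s)) s) →
        ξt tt = x → ξt αt = 0 → (∀ s ∈ Icc αt tt, ξt s ∈ Icc (0:ℝ) 1) →
        (∀ s ∈ Icc αt t, |ξt s - ξ s| ≤ C * |tt - t|) ∧ |αt - α| ≤ C * |tt - t| := by
  obtain ⟨hC1, hpos⟩ := hlam
  set Kset : Set (ℝ × ℝ) := Icc (0:ℝ) 1 ×ˢ Icc (0:ℝ) M with hKset
  have hsub : Kset ⊆ Icc (0:ℝ) 1 ×ˢ Ici (0:ℝ) :=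
    prod_mono subset_rfl Icc_subset_Ici_self
  have hC1' : ContDiffOn ℝ 1 (uncurry lam) Kset := hC1.mono hsub
  have hKcomp : IsCompact Kset := isCompact_Icc.prod isCompact_Icc
  have hKconv : Convex ℝ Kset := (convex_Icc _ _).prod (convex_Icc _ _)
  have hKud : UniqueDiffOn ℝ Kset := (uniqueDiffOn_Icc one_pos).prod (uniqueDiffOn_Icc hM)
  have hcont : ContinuousOn (uncurry lam) Kset := hC1'.continuousOn
  have hKne : Kset.Nonempty := ⟨(0, 0), ⟨⟨le_refl 0, zero_le_one⟩, ⟨le_refl 0, hM.le⟩⟩⟩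
  obtain ⟨qm, hqm, hqmin⟩ := hKcomp.exists_isMinOn hKne hcont
  obtain ⟨qM, hqM, hqmax⟩ := hKcomp.exists_isMaxOn hKne hcont
  set m : ℝ := uncurry lam qm with hmdef
  set Λ : ℝ := uncurry lam qM with hΛdef
  have hm0 : 0 < m := hpos qm.1 hqm.1 qm.2 hqm.2.1
  have hmΛ : m ≤ Λ := hqmax hqm
  have hΛ0 : 0 < Λ := lt_of_lt_of_le hm0 hmΛ
  -- Lipschitz constant
  obtain ⟨B, hB⟩ := hKcomp.exists_bound_of_continuousOn
    (hC1'.continuousOn_fderivWithin hKud le_rfl)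
  set L : NNReal := Real.toNNReal B with hLdef
  have hLip : LipschitzOnWith L (uncurry lam) Kset := by
    apply hKconv.lipschitzOnWith_of_nnnorm_fderivWithin_le (hC1'.differentiableOn one_ne_zero)
    intro q hq
    rw [← NNReal.coe_le_coe, coe_nnnorm]
    exact (hB q hq).trans (Real.le_coe_toNNReal B)
  have hxlip : ∀ w ∈ Icc (0:ℝ) M, ∀ y₁ ∈ Icc (0:ℝ) 1, ∀ y₂ ∈ Icc (0:ℝ) 1,
      dist (lam y₁ w) (lam y₂ w) ≤ L * dist y₁ y₂ := by
    intro w hw y₁ h₁ y₂ h₂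
    have := hLip.dist_le_mul (y₁, w) ⟨h₁, hw⟩ (y₂, w) ⟨h₂, hw⟩
    simpa [Prod.dist_eq, dist_self, max_eq_left dist_nonneg, Function.uncurry_apply_pair]
      using this
  set Eb : ℝ := Λ * Real.exp (L * δ) with hEbdef
  have hEb0 : 0 < Eb := mul_pos hΛ0 (Real.exp_pos _)
  have hEbm : 0 ≤ Eb / m := (div_pos hEb0 hm0).le
  have hΛm : 0 ≤ Λ / m := (div_pos hΛ0 hm0).le
  refine ⟨Eb + Eb / m + Λ / m + 1, by linarith, ?_⟩
  intro W hWc hWM t tt ht htt htt' x hx ξ ξt α αt hαmem hαtmem hder hξteq hξαeq hξmem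
    hder' hξttteq hξtαteq hξtmem
  have hh0 : (0:ℝ) ≤ tt - t := by linarith
  have habs : |tt - t| = tt - t := abs_of_nonneg hh0
  -- pointwise bounds on the velocity along the curves
  have hlamξ : ∀ s ∈ Icc α t, m ≤ lam (ξ s) (W s) ∧ lam (ξ s) (W s) ≤ Λ := by
    intro s hs
    have hsδ : s ∈ Icc (0:ℝ) δ := ⟨le_trans hαmem.1 hs.1, le_trans hs.2 ht.2⟩
    have hq : (ξ s, W s) ∈ Kset := ⟨hξmem s hs, hWM s hsδ⟩
    exact ⟨hqmin hq, hqmax hq⟩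
  have hlamξt : ∀ s ∈ Icc αt tt, m ≤ lam (ξt s) (W s) ∧ lam (ξt s) (W s) ≤ Λ := by
    intro s hs
    have hsδ : s ∈ Icc (0:ℝ) δ := ⟨le_trans hαtmem.1 hs.1, le_trans hs.2 htt.2⟩
    have hq : (ξt s, W s) ∈ Kset := ⟨hξtmem s hs, hWM s hsδ⟩
    exact ⟨hqmin hq, hqmax hq⟩
  clear_value m Λ L Eb
  -- the ODE data for Grönwall
  set v : ℝ → ℝ → ℝ := fun σ y => lam y (W σ) with hvdef
  set sset : ℝ → Set ℝ := fun σ => if σ ∈ Icc (0:ℝ) δ then Icc (0:ℝ) 1 else (∅ : Set ℝ)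
    with hssetdef
  have hv : ∀ σ, LipschitzOnWith L (v σ) (sset σ) := by
    intro σ
    by_cases hσ : σ ∈ Icc (0:ℝ) δ
    · rw [hssetdef]
      simp only [if_pos hσ]
      rw [lipschitzOnWith_iff_dist_le_mul]
      intro y₁ h₁ y₂ h₂
      exact hxlip (W σ) (hWM σ hσ) y₁ h₁ y₂ h₂
    · rw [hssetdef]
      simp only [if_neg hσ]
      exact lipschitzOnWith_empty L _
  have hcontξ : ContinuousOn ξ (Icc α t) :=
    fun s hs => (hder s hs).continuousAt.continuousWithinAt
  have hcontξt : ContinuousOn ξt (Icc αt tt) :=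
    fun s hs => (hder' s hs).continuousAt.continuousWithinAt
  by_cases hcase : αt ≤ t
  · -- the hitting time of `ξt` is before `t`
    by_cases hord : α ≤ αt
    · -- main case: Grönwall on `[αt, t]`
      have hbdist : dist (ξt t) (ξ t) ≤ Λ * (tt - t) := by
        have htmem : t ∈ Icc αt tt := ⟨hcase, htt'⟩
        have httmem : tt ∈ Icc αt tt := ⟨hαtmem.2, le_rfl⟩
        have hup : ξt tt - ξt t ≤ Λ * (tt - t) :=
          slope_upper_aux hder' (fun s hs => (hlamξt s hs).2) htmem httmem htt'
        have hlow : m * (tt - t) ≤ ξt tt - ξt t :=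
          slope_lower_aux hder' (fun s hs => (hlamξt s hs).1) htmem httmem htt'
        have h1 : ξt t ≤ x := by nlinarith
        rw [Real.dist_eq, hξteq, abs_of_nonpos (by linarith)]
        rw [hξttteq] at hup
        linarith
      have gr := gronwall_left_aux (v := v) (s := sset) (K := L) hv
          (f := ξt) (g := ξ) (a := αt) (b := t) (δ := Λ * (tt - t))
          (hcontξt.mono (Icc_subset_Icc le_rfl htt'))
          (fun σ hσ => (hder' σ ⟨hσ.1.le, hσ.2.trans htt'⟩).hasDerivWithinAt)
          (fun σ hσ => by
            have hσδ : σ ∈ Icc (0:ℝ) δ := ⟨le_trans hαtmem.1 hσ.1.le, le_trans hσ.2 ht.2⟩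
            rw [hssetdef]; simp only [if_pos hσδ]
            exact hξtmem σ ⟨hσ.1.le, hσ.2.trans htt'⟩)
          (hcontξ.mono (Icc_subset_Icc hord le_rfl))
          (fun σ hσ => (hder σ ⟨hord.trans hσ.1.le, hσ.2⟩).hasDerivWithinAt)
          (fun σ hσ => by
            have hσδ : σ ∈ Icc (0:ℝ) δ := ⟨le_trans hαtmem.1 hσ.1.le, le_trans hσ.2 ht.2⟩
            rw [hssetdef]; simp only [if_pos hσδ]
            exact hξmem σ ⟨hord.trans hσ.1.le, hσ.2⟩)
          hbdist
      have grb : ∀ σ ∈ Icc αt t, |ξt σ - ξ σ| ≤ Eb * (tt - t) := by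
        intro σ hσ
        have hge := gr σ hσ
        rw [Real.dist_eq] at hge
        refine hge.trans ?_
        have he : Real.exp (L * (t - σ)) ≤ Real.exp (L * δ) := by
          apply Real.exp_le_exp.mpr
          apply mul_le_mul_of_nonneg_left _ L.coe_nonneg
          have := hσ.1
          have := hαtmem.1
          have := ht.2
          linarith
        calc Λ * (tt - t) * Real.exp (L * (t - σ))
            ≤ Λ * (tt - t) * Real.exp (L * δ) := by
              apply mul_le_mul_of_nonneg_left he (mul_nonneg hΛ0.le hh0)
          _ = Eb * (tt - t) := by rw [hEbdef]; ring
      constructor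
      · intro s hs
        rw [habs]
        refine (grb s hs).trans ?_
        apply mul_le_mul_of_nonneg_right _ hh0
        linarith
      · -- hitting time estimate
        have hαtt : αt ∈ Icc α t := ⟨hord, hcase⟩
        have h1 : ξ αt ≤ Eb * (tt - t) := by
          have := grb αt ⟨le_rfl, hcase⟩
          rw [hξtαteq, zero_sub, abs_neg, abs_of_nonneg (hξmem αt hαtt).1] at this
          exact this
        have h2 : m * (αt - α) ≤ ξ αt - ξ α :=
          slope_lower_aux hder (fun s hs => (hlamξ s hs).1) ⟨le_rfl, hαmem.2⟩ hαtt hord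
        rw [hξαeq, sub_zero] at h2
        rw [abs_of_nonneg (by linarith : (0:ℝ) ≤ αt - α), habs]
        have h3 : αt - α ≤ Eb / m * (tt - t) := by
          rw [div_mul_eq_mul_div, le_div_iff₀ hm0]
          nlinarith
        have h4 : 0 ≤ (Eb + Λ / m + 1) * (tt - t) := by
          apply mul_nonneg _ hh0
          linarith
        nlinarith
    · -- impossible: `αt < α`
      exfalso
      push_neg at hord
      have hαtt2 : α ∈ Icc αt tt := ⟨hord.le, hαmem.2.trans htt'⟩
      have hd0 : 0 < ξt α := by
        have := slope_lower_aux hder' (fun s hs => (hlamξt s hs).1)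
          ⟨le_rfl, hαtmem.2⟩ hαtt2 hord.le
        rw [hξtαteq, sub_zero] at this
        nlinarith
      have hdt : ξt t ≤ x := by
        have := slope_lower_aux hder' (fun s hs => (hlamξt s hs).1)
          ⟨hcase, htt'⟩ ⟨hαtmem.2, le_rfl⟩ htt'
        rw [hξttteq] at this
        nlinarith
      -- continuous difference on [α, t]
      have hdiffc : ContinuousOn (fun s => ξt s - ξ s) (Icc α t) := by
        apply ContinuousOn.sub _ hcontξ
        exact hcontξt.mono (Icc_subset_Icc hord.le (htt'))
      have hzmem : (0:ℝ) ∈ Icc ((fun s => ξt s - ξ s) t) ((fun s => ξt s - ξ s) α) := by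
        constructor
        · simp only; rw [hξteq]; linarith
        · simp only; rw [hξαeq]; linarith
      obtain ⟨s₀, hs₀mem, hs₀⟩ := intermediate_value_Icc' hαmem.2 hdiffc hzmem
      have heq0 : ξt s₀ = ξ s₀ := by
        have : ξt s₀ - ξ s₀ = 0 := hs₀
        linarith
      -- backward uniqueness on [α, s₀]
      have huniq := ODE_solution_unique_of_mem_Icc_left (v := v) (s := sset) (K := L) (fun σ _ => hv σ)
          (f := ξt) (g := ξ) (a := α) (b := s₀)
          (hcontξt.mono (Icc_subset_Icc hord.le (hs₀mem.2.trans htt')))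
          (fun σ hσ => (hder' σ ⟨hord.le.trans hσ.1.le, (hσ.2.trans hs₀mem.2).trans htt'⟩).hasDerivWithinAt)
          (fun σ hσ => by
            have hσδ : σ ∈ Icc (0:ℝ) δ :=
              ⟨le_trans hαmem.1 hσ.1.le, le_trans (hσ.2.trans hs₀mem.2) ht.2⟩
            rw [hssetdef]; simp only [if_pos hσδ]
            exact hξtmem σ ⟨hord.le.trans hσ.1.le, (hσ.2.trans hs₀mem.2).trans htt'⟩)
          (hcontξ.mono (Icc_subset_Icc le_rfl hs₀mem.2))
          (fun σ hσ => (hder σ ⟨hσ.1.le, hσ.2.trans hs₀mem.2⟩).hasDerivWithinAt)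
          (fun σ hσ => by
            have hσδ : σ ∈ Icc (0:ℝ) δ :=
              ⟨le_trans hαmem.1 hσ.1.le, le_trans (hσ.2.trans hs₀mem.2) ht.2⟩
            rw [hssetdef]; simp only [if_pos hσδ]
            exact hξmem σ ⟨hσ.1.le, hσ.2.trans hs₀mem.2⟩)
          heq0
      have : ξt α = ξ α := huniq ⟨le_rfl, hs₀mem.1⟩
      rw [hξαeq] at this
      linarith
  · -- `t < αt`: the interval `[αt, t]` is empty
    push_neg at hcase
    constructor
    · intro s hs
      exact absurd (hs.1.trans hs.2) (not_le.mpr hcase)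
    · have h1 : m * (t - α) ≤ x := by
        have := slope_lower_aux hder (fun s hs => (hlamξ s hs).1)
          ⟨le_rfl, hαmem.2⟩ ⟨hαmem.2, le_rfl⟩ hαmem.2
        rw [hξteq, hξαeq, sub_zero] at this
        exact this
      have h2 : x ≤ Λ * (tt - αt) := by
        have := slope_upper_aux hder' (fun s hs => (hlamξt s hs).2)
          ⟨le_rfl, hαtmem.2⟩ ⟨hαtmem.2, le_rfl⟩ hαtmem.2
        rw [hξttteq, hξtαteq, sub_zero] at this
        exact this
      have hx1 : m * (t - α) ≤ Λ * (tt - t) := by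
        refine h1.trans (h2.trans ?_)
        apply mul_le_mul_of_nonneg_left _ hΛ0.le
        linarith
      have h4 : t - α ≤ Λ / m * (tt - t) := by
        rw [div_mul_eq_mul_div, le_div_iff₀ hm0]
        nlinarith
      rw [abs_of_nonneg (by linarith [hαmem.2] : (0:ℝ) ≤ αt - α), habs]
      have h5 : 0 ≤ (Eb + Eb / m) * (tt - t) := by
        apply mul_nonneg _ hh0
        linarith
      have h6 : αt - t ≤ tt - t := by linarith [hαtmem.2]
      have heq : (Eb + Eb / m + Λ / m + 1) * (tt - t)
          = (Eb + Eb / m) * (tt - t) + Λ / m * (tt - t) + (tt - t) := by ring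
      linarith
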